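/- arXiv:2302.04357 — 5 statements merged into one kernel-verified Lean document; each statement's English description precedes it below -/
import Mathlib

section
/- For every hypothesis class H with Ldim(H) = d < ∞, the Standard Optimal Learner SOL_H, defined by SOL_H(S,x) = 1 if Ldim(H_S^{(x,1)}) ≥ Ldim(H_S^{(x,0)}) and 0 otherwise, makes at most d mistakes on any H-realizable sample. -/
open Classical

variable {X : Type*}

/-- A hypothesis `h` is consistent with a sample `S`. -/
def Consistent (h : X → Bool) (S : List (X × Bool)) : Prop :=
  ∀ p ∈ S, h p.1 = p.2

/-- A sample is realizable by the class `H`. -/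
def Realizable (H : Set (X → Bool)) (S : List (X × Bool)) : Prop :=
  ∃ h ∈ H, Consistent h S

/-- The version space `H_S`. -/
def VS (H : Set (X → Bool)) (S : List (X × Bool)) : Set (X → Bool) :=
  {h ∈ H | Consistent h S}

/-- `H^{(x,r)}`. -/
def Restrict (H : Set (X → Bool)) (x : X) (r : Bool) : Set (X → Bool) :=
  {h ∈ H | h x = r}

/-- `Shatters H d` holds iff there is a complete binary tree of depth `d` shattered by `H`,
equivalently stated recursively. -/
def Shatters (H : Set (X → Bool)) : ℕ → Prop
  | 0 => H.Nonempty
  | d + 1 => ∃ x : X, Shatters (Restrict H x false) d ∧ Shatters (Restrict H x true) d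

/-- Littlestone dimension, with `Ldim ∅ = ⊥` (playing the role of `-1`). -/
noncomputable def Ldim (H : Set (X → Bool)) : WithBot ℕ∞ :=
  ⨆ d ∈ {d : ℕ | Shatters H d}, ((d : ℕ∞) : WithBot ℕ∞)

def MistakesFrom (A : List (X × Bool) → X → Bool) :
    List (X × Bool) → List (X × Bool) → ℕ
  | _, [] => 0
  | pre, p :: rest =>
      (if A pre p.1 ≠ p.2 then 1 else 0) + MistakesFrom A (pre ++ [p]) rest

/-- Number of mistakes that the online learner `A` makes on the sample `S`. -/
def Mistakes (A : List (X × Bool) → X → Bool) (S : List (X × Bool)) : ℕ :=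
  MistakesFrom A [] S

/-- Mistake bound of `A` with respect to `H`. -/
noncomputable def MB (A : List (X × Bool) → X → Bool) (H : Set (X → Bool)) : ℕ∞ :=
  ⨆ S ∈ {S | Realizable H S}, (Mistakes A S : ℕ∞)

/-- `A` is an optimal online learner for `H`. -/
def IsOptimal (A : List (X × Bool) → X → Bool) (H : Set (X → Bool)) : Prop :=
  MB A H = ⨅ B : List (X × Bool) → X → Bool, MB B H

/-- Post-`S` mistake bound of `A` w.r.t. `H`. -/
noncomputable def PostMB (A : List (X × Bool) → X → Bool) (H : Set (X → Bool))
    (S : List (X × Bool)) : ℕ∞ :=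
  ⨆ S' ∈ {S' | Realizable H (S ++ S')}, ((Mistakes A (S ++ S') - Mistakes A S : ℕ) : ℕ∞)

/-- Optimal post-`S` mistake bound. -/
noncomputable def OptPostMB (H : Set (X → Bool)) (S : List (X × Bool)) : ℕ∞ :=
  ⨅ A : List (X × Bool) → X → Bool, PostMB A H S

/-- `A` is anytime optimal for `H`. -/
def AnytimeOptimal (A : List (X × Bool) → X → Bool) (H : Set (X → Bool)) : Prop :=
  ∀ S, Realizable H S → PostMB A H S = OptPostMB H S

/-- The Standard Optimal Learner for `H`. -/
noncomputable def SOL (H : Set (X → Bool)) : List (X × Bool) → X → Bool :=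
  fun S x =>
    if Ldim (Restrict (VS H S) x false) ≤ Ldim (Restrict (VS H S) x true) then true
    else false

lemma Restrict_subset (H : Set (X → Bool)) (x : X) (r : Bool) : Restrict H x r ⊆ H :=
  fun _ hh => hh.1

lemma Shatters.mono {H₁ H₂ : Set (X → Bool)} (hs : H₁ ⊆ H₂) {d : ℕ}
    (h : Shatters H₁ d) : Shatters H₂ d := by
  induction d generalizing H₁ H₂ with
  | zero => exact Set.Nonempty.mono hs h
  | succ m ih =>
    obtain ⟨x, h0, h1⟩ := h
    exact ⟨x, ih (fun g hg => ⟨hs hg.1, hg.2⟩) h0, ih (fun g hg => ⟨hs hg.1, hg.2⟩) h1⟩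

lemma shatters_pred {H : Set (X → Bool)} {d : ℕ} (h : Shatters H (d + 1)) : Shatters H d := by
  obtain ⟨x, h0, _⟩ := h
  exact h0.mono (Restrict_subset _ _ _)

lemma shatters_of_le {H : Set (X → Bool)} {j d : ℕ} (h : j ≤ d) (hs : Shatters H d) :
    Shatters H j := by
  induction d with
  | zero => obtain rfl : j = 0 := Nat.le_zero.mp h; exact hs
  | succ m ih =>
    rcases eq_or_lt_of_le h with rfl | hlt
    · exact hs
    · exact ih (by omega) (shatters_pred hs)

lemma le_Ldim {H : Set (X → Bool)} {k : ℕ} (h : Shatters H k) :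
    ((k : ℕ∞) : WithBot ℕ∞) ≤ Ldim H :=
  le_iSup₂ (f := fun (d : ℕ) (_ : d ∈ {d : ℕ | Shatters H d}) => ((d : ℕ∞) : WithBot ℕ∞)) k h

lemma Ldim_le_iff {H : Set (X → Bool)} {c : WithBot ℕ∞} :
    Ldim H ≤ c ↔ ∀ k : ℕ, Shatters H k → ((k : ℕ∞) : WithBot ℕ∞) ≤ c :=
  iSup₂_le_iff

lemma shatters_of_le_Ldim {H : Set (X → Bool)} {k : ℕ}
    (h : ((k : ℕ∞) : WithBot ℕ∞) ≤ Ldim H) : Shatters H k := by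
  by_contra hk
  have hlt : Ldim H < ((k : ℕ∞) : WithBot ℕ∞) := by
    cases k with
    | zero =>
      have hemp : {d : ℕ | Shatters H d} = ∅ := by
        ext j
        simp only [Set.mem_setOf_eq, Set.mem_empty_iff_false, iff_false]
        exact fun hj => hk (shatters_of_le (Nat.zero_le j) hj)
      rw [Ldim, hemp]
      simp only [Set.mem_empty_iff_false, iSup_false, iSup_bot]
      exact WithBot.bot_lt_coe _
    | succ m =>
      have hle : Ldim H ≤ ((m : ℕ∞) : WithBot ℕ∞) := by
        rw [Ldim_le_iff]
        intro j hj
        have hjm : j ≤ m := by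
          by_contra h'
          exact hk (shatters_of_le (by omega) hj)
        exact_mod_cast hjm
      refine lt_of_le_of_lt hle ?_
      exact_mod_cast Nat.lt_succ_self m
  exact absurd h hlt.not_ge

lemma VS_append (H : Set (X → Bool)) (pre : List (X × Bool)) (p : X × Bool) :
    VS H (pre ++ [p]) = Restrict (VS H pre) p.1 p.2 := by
  ext h
  simp only [VS, Restrict, Consistent, Set.mem_setOf_eq, List.mem_append, List.mem_singleton]
  constructor
  · rintro ⟨hH, hc⟩
    exact ⟨⟨hH, fun q hq => hc q (Or.inl hq)⟩, hc p (Or.inr rfl)⟩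
  · rintro ⟨⟨hH, hc⟩, hp⟩
    refine ⟨hH, fun q hq => ?_⟩
    rcases hq with hq | hq
    · exact hc q hq
    · subst hq; exact hp

lemma mistake_step {H : Set (X → Bool)} {pre : List (X × Bool)} {p : X × Bool}
    (hmiss : SOL H pre p.1 ≠ p.2) {k : ℕ}
    (hk : Shatters (Restrict (VS H pre) p.1 p.2) k) :
    Shatters (VS H pre) (k + 1) := by
  have hside : Ldim (Restrict (VS H pre) p.1 p.2) ≤ Ldim (Restrict (VS H pre) p.1 (!p.2)) := by
    unfold SOL at hmiss
    cases hp : p.2 <;> rw [hp] at hmiss <;>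
      simp only [Bool.not_false, Bool.not_true]
    · by_contra hcon
      push_neg at hcon
      rw [if_neg (not_le_of_gt hcon)] at hmiss
      exact hmiss rfl
    · by_cases hle : Ldim (Restrict (VS H pre) p.1 false) ≤ Ldim (Restrict (VS H pre) p.1 true)
      · rw [if_pos hle] at hmiss
        exact absurd rfl hmiss
      · exact le_of_not_ge hle
  have hother : Shatters (Restrict (VS H pre) p.1 (!p.2)) k :=
    shatters_of_le_Ldim (le_trans (le_Ldim hk) hside)
  cases hp : p.2 <;> rw [hp] at hk hother <;>
    simp only [Bool.not_false, Bool.not_true] at hother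
  · exact ⟨p.1, hk, hother⟩
  · exact ⟨p.1, hother, hk⟩

lemma main_aux (H : Set (X → Bool)) :
    ∀ (S pre : List (X × Bool)) (d : ℕ), Realizable H (pre ++ S) →
      (∀ k, Shatters (VS H pre) k → k ≤ d) →
      MistakesFrom (SOL H) pre S ≤ d := by
  intro S
  induction S with
  | nil => intro pre d _ _; simp [MistakesFrom]
  | cons p rest ih =>
    intro pre d hreal hld
    obtain ⟨h, hH, hcons⟩ := hreal
    have hmem : h ∈ Restrict (VS H pre) p.1 p.2 := by
      refine ⟨⟨hH, fun q hq => hcons q (by simp [hq])⟩, hcons p (by simp)⟩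
    have hreal' : Realizable H ((pre ++ [p]) ++ rest) := by
      refine ⟨h, hH, fun q hq => hcons q ?_⟩
      simp only [List.mem_append, List.mem_singleton, List.mem_cons] at hq ⊢
      tauto
    rw [MistakesFrom]
    by_cases hm : SOL H pre p.1 ≠ p.2
    · have h1d : ∀ k, Shatters (VS H (pre ++ [p])) k → k + 1 ≤ d := by
        intro k hk
        rw [VS_append] at hk
        exact hld _ (mistake_step hm hk)
      have hd1 : 1 ≤ d := h1d 0 (by rw [VS_append]; exact ⟨h, hmem⟩)
      have hrec := ih (pre ++ [p]) (d - 1) hreal' (fun k hk => by have := h1d k hk; omega)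
      rw [if_pos hm]
      omega
    · have hrec := ih (pre ++ [p]) d hreal' (fun k hk => by
        rw [VS_append] at hk
        exact hld k (hk.mono (Restrict_subset _ _ _)))
      rw [if_neg hm]
      omega

/-- if `Ldim H = d < ∞`, the Standard Optimal Learner makes at most `d`
mistakes on any `H`-realizable sample. -/
theorem stmt2 {X : Type*} (H : Set (X → Bool)) (d : ℕ)
    (hd : Ldim H = ((d : ℕ∞) : WithBot ℕ∞)) :
    ∀ S : List (X × Bool), Realizable H S → Mistakes (SOL H) S ≤ d := by
  intro S hS
  have hVS : VS H ([] : List (X × Bool)) = H := by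
    ext h; simp [VS, Consistent]
  have hld : ∀ k, Shatters H k → k ≤ d := by
    intro k hk
    have hle := le_Ldim hk
    rw [hd] at hle
    exact_mod_cast hle
  have hmain := main_aux H S [] d (by simpa using hS)
    (fun k hk => hld k (by rwa [hVS] at hk))
  simpa [Mistakes] using hmain
end

section
/- For every hypothesis class H and every online learner A, if Ldim(H) ≥ d for some natural number d, then there exists an H-realizable sample of length d on which A makes d mistakes. Consequently M_A(H) ≥ Ldim(H) for every online learner A. -/
open Classical

variable {X : Type*}

lemma adversary_aux {X : Type*} (A : List (X × Bool) → X → Bool) :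
    ∀ (d : ℕ) (H' : Set (X → Bool)) (pre : List (X × Bool)), Shatters H' d →
      ∃ S : List (X × Bool), Realizable H' S ∧ S.length = d ∧ MistakesFrom A pre S = d := by
  intro d
  induction d with
  | zero =>
    intro H' pre h
    exact ⟨[], ⟨h.choose, h.choose_spec, fun p hp => by simp at hp⟩, rfl, rfl⟩
  | succ d ih =>
    intro H' pre h
    obtain ⟨x, hf, ht⟩ := h
    set b := !(A pre x) with hb
    have hsh : Shatters (Restrict H' x b) d := by cases hAb : A pre x <;> simp [hb, hAb, hf, ht]
    obtain ⟨S, ⟨g, hg, hgc⟩, hlen, hmis⟩ := ih (Restrict H' x b) (pre ++ [(x, b)]) hsh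
    refine ⟨(x, b) :: S, ⟨g, hg.1, ?_⟩, by simp [hlen], ?_⟩
    · intro p hp
      rcases List.mem_cons.1 hp with rfl | hp
      · exact hg.2
      · exact hgc p hp
    · have : A pre x ≠ b := by cases hA : A pre x <;> simp [hb, hA]
      simp [MistakesFrom, this, hmis, Nat.add_comm]

/-- for every online learner `A`, if `Ldim H ≥ d` then there is an
`H`-realizable sample of length `d` on which `A` makes `d` mistakes; consequently
`M_A(H) ≥ Ldim H`. -/
theorem stmt3 {X : Type*} (H : Set (X → Bool)) (A : List (X × Bool) → X → Bool) :
    (∀ d : ℕ, Shatters H d →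
      ∃ S : List (X × Bool), Realizable H S ∧ S.length = d ∧ Mistakes A S = d) ∧
    Ldim H ≤ ((MB A H : ℕ∞) : WithBot ℕ∞) := by
  have main : ∀ d : ℕ, Shatters H d →
      ∃ S : List (X × Bool), Realizable H S ∧ S.length = d ∧ Mistakes A S = d := by
    intro d hd
    obtain ⟨S, hr, hl, hm⟩ := adversary_aux A d H [] hd
    exact ⟨S, hr, hl, hm⟩
  refine ⟨main, ?_⟩
  rw [Ldim]
  refine iSup₂_le fun d hd => ?_
  obtain ⟨S, hr, hl, hm⟩ := main d hd
  have : (d : ℕ∞) ≤ MB A H := by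
    rw [← hm]
    exact le_iSup₂ (f := fun S _ => (Mistakes A S : ℕ∞)) S hr
  exact_mod_cast this
end

section
/- Define the class H = ∪_{e∈ℕ} {χ_{{3e}}} ∪ ∪_{e : φ_e(e)↓} {χ_{{3e,3e+1}}, χ_{{3e,3e+1,3e+2}}} over domain ℕ. Then every anytime optimal online learner A for H satisfies: for every e, on the sample S^e = ((3e,1)) and query point 3e+1, A predicts 1 if φ_e(e)↓ and 0 otherwise. Consequently no anytime optimal online learner for H is computable. -/
open Classical

variable {X : Type*}

/-- The `e`-th partial computable function in the standard numbering by codes. -/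
def phi (e : ℕ) : ℕ →. ℕ :=
  (Denumerable.ofNat Nat.Partrec.Code e).eval

/-- `φ_e(x)↓`. -/
def phiHalts (e x : ℕ) : Prop := (phi e x).Dom

/-- The {0,1}-valued learner induced by a two-place partial computable function:
it predicts `true` exactly when the output converges to `1`. -/
noncomputable def predOf (A : ℕ → ℕ →. ℕ) : List (ℕ × Bool) → ℕ → Bool :=
  fun S x => if 1 ∈ A (Encodable.encode S) x then true else false

/-- `A` is a computable online learner for `H`: a two-place partial computable function
converging with value in {0,1} on every (encoded `H`-realizable sample, point) pair. -/
def IsCOnlineLearner (A : ℕ → ℕ →. ℕ) (H : Set (ℕ → Bool)) : Prop :=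
  Partrec₂ A ∧
    ∀ S : List (ℕ × Bool), Realizable H S → ∀ x : ℕ,
      ∃ y ∈ A (Encodable.encode S) x, y = 0 ∨ y = 1

/-- The class `H^RER_halt = ∪_e {χ_{3e}} ∪ ∪_{e : φ_e(e)↓} {χ_{3e,3e+1}, χ_{3e,3e+1,3e+2}}`. -/
def HhaltRER : Set (ℕ → Bool) :=
  {f | ∃ e : ℕ, f = fun n => decide (n = 3 * e)} ∪
  {f | ∃ e : ℕ, phiHalts e e ∧
    (f = (fun n => decide (n = 3 * e ∨ n = 3 * e + 1)) ∨
     f = (fun n => decide (n = 3 * e ∨ n = 3 * e + 1 ∨ n = 3 * e + 2)))}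

section AuxStmt7

def chi1 (e : ℕ) : ℕ → Bool := fun n => decide (n = 3 * e)
def chi2 (e : ℕ) : ℕ → Bool := fun n => decide (n = 3 * e ∨ n = 3 * e + 1)
def chi3 (e : ℕ) : ℕ → Bool := fun n => decide (n = 3 * e ∨ n = 3 * e + 1 ∨ n = 3 * e + 2)

def Blearn (e : ℕ) : List (ℕ × Bool) → ℕ → Bool := fun L x =>
  if (3 * e + 1, false) ∈ L then chi1 e x
  else if (3 * e + 2, true) ∈ L then chi3 e x
  else chi2 e x

lemma mistakesFrom_append {X : Type*} (A : List (X × Bool) → X → Bool)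
    (l1 l2 pre : List (X × Bool)) :
    MistakesFrom A pre (l1 ++ l2) = MistakesFrom A pre l1 + MistakesFrom A (pre ++ l1) l2 := by
  induction l1 generalizing pre with
  | nil => simp [MistakesFrom]
  | cons p t ih =>
      simp only [List.cons_append, MistakesFrom, List.append_eq]
      rw [ih]
      rw [show pre ++ p :: t = (pre ++ [p]) ++ t by simp]
      omega

lemma mistakes_sub {X : Type*} (A : List (X × Bool) → X → Bool) (S S' : List (X × Bool)) :
    Mistakes A (S ++ S') - Mistakes A S = MistakesFrom A S S' := by
  unfold Mistakes
  rw [mistakesFrom_append]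
  simp

lemma le_postMB {X : Type*} {A : List (X × Bool) → X → Bool} {H : Set (X → Bool)}
    {S S' : List (X × Bool)} (h : Realizable H (S ++ S')) :
    (MistakesFrom A S S' : ℕ∞) ≤ PostMB A H S := by
  rw [← mistakes_sub A S S']
  exact le_iSup₂ (f := fun S' (_ : S' ∈ {S' | Realizable H (S ++ S')}) =>
    ((Mistakes A (S ++ S') - Mistakes A S : ℕ) : ℕ∞)) S' h

lemma postMB_le {X : Type*} {A : List (X × Bool) → X → Bool} {H : Set (X → Bool)}
    {S : List (X × Bool)} {k : ℕ}
    (h : ∀ S', Realizable H (S ++ S') → MistakesFrom A S S' ≤ k) :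
    PostMB A H S ≤ (k : ℕ∞) := by
  refine iSup₂_le fun S' hS' => ?_
  rw [mistakes_sub]
  exact_mod_cast h S' hS'

lemma mistakesFrom_const {X : Type*} (h : X → Bool) (S' : List (X × Bool)) :
    ∀ pre, Consistent h (pre ++ S') → MistakesFrom (fun _ => h) pre S' = 0 := by
  induction S' with
  | nil => intro pre _; rfl
  | cons p t ih =>
      intro pre hc
      have hp : h p.1 = p.2 := hc p (by simp)
      have ht : Consistent h ((pre ++ [p]) ++ t) := by
        intro q hq; exact hc q (by simpa [List.append_assoc] using hq)
      simp [MistakesFrom, hp, ih _ ht]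

lemma Blearn_zero (e : ℕ) (S' : List (ℕ × Bool)) :
    ∀ pre (h : ℕ → Bool), Consistent h (pre ++ S') →
      ((h = chi1 e ∧ (3*e+1, false) ∈ pre) ∨
       (h = chi3 e ∧ (3*e+1, false) ∉ pre ∧ (3*e+2, true) ∈ pre) ∨
       (h = chi2 e ∧ (3*e+1, false) ∉ pre ∧ (3*e+2, true) ∉ pre)) →
      MistakesFrom (Blearn e) pre S' = 0 := by
  induction S' with
  | nil => intro pre h _ _; rfl
  | cons p t ih =>
      intro pre h hc hst
      obtain ⟨x, b⟩ := p
      have hp : h x = b := hc (x, b) (by simp)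
      have hc' : Consistent h ((pre ++ [(x, b)]) ++ t) := by
        intro q hq; exact hc q (by simpa [List.append_assoc] using hq)
      rcases hst with ⟨rfl, h1⟩ | ⟨rfl, h1, h2⟩ | ⟨rfl, h1, h2⟩
      · have hpred : Blearn e pre x = b := by simp [Blearn, h1, hp]
        have hz := ih (pre ++ [(x, b)]) (chi1 e) hc' (Or.inl ⟨rfl, by simp [h1]⟩)
        simp [MistakesFrom, hpred, hz]
      · have hxb : ¬ ((3*e+1 : ℕ), false) = (x, b) := by
          rintro ⟨⟩
          simp only [chi3, decide_eq_true_eq] at hp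
          revert hp; simp
        have hpred : Blearn e pre x = b := by simp [Blearn, h1, h2, hp]
        have hz := ih (pre ++ [(x, b)]) (chi3 e) hc'
          (Or.inr (Or.inl ⟨rfl, by
            simp only [List.mem_append, List.mem_singleton]
            rintro (hm | hm)
            · exact h1 hm
            · exact hxb hm, by simp [h2]⟩))
        simp [MistakesFrom, hpred, hz]
      · have hxb1 : ¬ ((3*e+1 : ℕ), false) = (x, b) := by
          rintro ⟨⟩
          simp only [chi2, decide_eq_true_eq] at hp
          revert hp; simp
        have hxb2 : ¬ ((3*e+2 : ℕ), true) = (x, b) := by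
          rintro ⟨⟩
          simp only [chi2] at hp
          revert hp; simp
        have hpred : Blearn e pre x = b := by simp [Blearn, h1, h2, hp]
        have hz := ih (pre ++ [(x, b)]) (chi2 e) hc'
          (Or.inr (Or.inr ⟨rfl, by
              simp only [List.mem_append, List.mem_singleton]
              rintro (hm | hm)
              · exact h1 hm
              · exact hxb1 hm, by
              simp only [List.mem_append, List.mem_singleton]
              rintro (hm | hm)
              · exact h2 hm
              · exact hxb2 hm⟩))
        simp [MistakesFrom, hpred, hz]

lemma Blearn_one (e : ℕ) (S' : List (ℕ × Bool)) :
    ∀ pre (h : ℕ → Bool), Consistent h (pre ++ S') →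
      (h = chi1 e ∨ h = chi2 e ∨ h = chi3 e) →
      (3*e+1, false) ∉ pre → (3*e+2, true) ∉ pre →
      MistakesFrom (Blearn e) pre S' ≤ 1 := by
  induction S' with
  | nil => intro pre h _ _ _ _; simp [MistakesFrom]
  | cons p t ih =>
      intro pre h hc hh h1 h2
      obtain ⟨x, b⟩ := p
      have hp : h x = b := hc (x, b) (by simp)
      have hc' : Consistent h ((pre ++ [(x, b)]) ++ t) := by
        intro q hq; exact hc q (by simpa [List.append_assoc] using hq)
      by_cases hmis : chi2 e x = b
      · have e1 : (3*e+1, false) ∉ pre ++ [(x, b)] := by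
          simp only [List.mem_append, List.mem_singleton]
          rintro (hm | hm)
          · exact h1 hm
          · obtain ⟨⟩ := hm
            simp only [chi2, decide_eq_true_eq] at hmis
            revert hmis; simp
        have e2 : (3*e+2, true) ∉ pre ++ [(x, b)] := by
          simp only [List.mem_append, List.mem_singleton]
          rintro (hm | hm)
          · exact h2 hm
          · obtain ⟨⟩ := hm
            simp only [chi2] at hmis
            revert hmis; simp
        have hpred : Blearn e pre x = b := by simp [Blearn, h1, h2, hmis]
        have := ih (pre ++ [(x, b)]) h hc' hh e1 e2
        simp only [MistakesFrom, hpred, ne_eq, not_true_eq_false, if_false]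
        simpa using this
      · rcases hh with rfl | rfl | rfl
        · have hx : x = 3*e+1 := by
            by_contra hx
            apply hmis
            rw [← hp]
            simp only [chi1, chi2]
            rw [decide_eq_decide]
            omega
          subst hx
          have hb : b = false := by
            rw [← hp]; simp only [chi1]
            rw [decide_eq_false (by omega)]
          subst hb
          have hz := Blearn_zero e t (pre ++ [(3*e+1, false)]) (chi1 e) hc'
            (Or.inl ⟨rfl, by simp⟩)
          have hpred : Blearn e pre (3*e+1) = true := by
            simp [Blearn, h1, h2, chi2]
          simp [MistakesFrom, hpred, hz]
        · exact absurd hp hmis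
        · have hx : x = 3*e+2 := by
            by_contra hx
            apply hmis
            rw [← hp]
            simp only [chi2, chi3]
            rw [decide_eq_decide]
            omega
          subst hx
          have hb : b = true := by rw [← hp]; simp [chi3]
          subst hb
          have hz := Blearn_zero e t (pre ++ [(3*e+2, true)]) (chi3 e) hc'
            (Or.inr (Or.inl ⟨rfl, by
                simp only [List.mem_append, List.mem_singleton]
                rintro (hm | hm)
                · exact h1 hm
                · exact absurd hm.symm (by simp), by simp⟩))
          have hpred : Blearn e pre (3*e+2) = false := by
            simp only [Blearn, if_neg h1, if_neg h2, chi2]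
            rw [decide_eq_false (by omega)]
          simp [MistakesFrom, hpred, hz]

end AuxStmt7

/-- every anytime optimal learner for `H^RER_halt` predicts, on the sample
`((3e,1))` and query `3e+1`, the value `1` iff `φ_e(e)↓`; consequently no anytime
optimal online learner for this class is computable. -/
theorem stmt7 :
    (∀ A : List (ℕ × Bool) → ℕ → Bool, AnytimeOptimal A HhaltRER →
      ∀ e : ℕ, (A [(3 * e, true)] (3 * e + 1) = true ↔ phiHalts e e)) ∧
    ¬ ∃ A : ℕ → ℕ →. ℕ,
        IsCOnlineLearner A HhaltRER ∧ AnytimeOptimal (predOf A) HhaltRER := by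
  have hchi1H : ∀ e, chi1 e ∈ HhaltRER := fun e => Or.inl ⟨e, rfl⟩
  have hSreal : ∀ e, Realizable HhaltRER [(3 * e, true)] := fun e =>
    ⟨chi1 e, hchi1H e, by
      intro p hp
      simp only [List.mem_singleton] at hp
      subst hp
      simp [chi1]⟩
  have main : ∀ A : List (ℕ × Bool) → ℕ → Bool, AnytimeOptimal A HhaltRER →
      ∀ e : ℕ, (A [(3 * e, true)] (3 * e + 1) = true ↔ phiHalts e e) := by
    intro A hA e
    have hopt := hA [(3 * e, true)] (hSreal e)
    constructor
    · -- A predicts true → φ_e(e)↓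
      intro hAtrue
      by_contra hhalt
      -- the learner that always plays χ_{3e} never errs after S
      have hC : PostMB (fun _ => chi1 e) HhaltRER [(3 * e, true)] ≤ ((0 : ℕ) : ℕ∞) := by
        apply postMB_le
        intro S' hS'
        obtain ⟨f, hH, hcons⟩ := hS'
        have h3e : f (3 * e) = true := hcons (3 * e, true) (by simp)
        have hf : f = chi1 e := by
          rcases hH with ⟨e', rfl⟩ | ⟨e', he', rfl | rfl⟩
          · simp only [decide_eq_true_eq] at h3e
            obtain rfl : e' = e := by omega
            rfl
          · exfalso
            simp only [decide_eq_true_eq] at h3e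
            obtain rfl : e' = e := by omega
            exact hhalt he'
          · exfalso
            simp only [decide_eq_true_eq] at h3e
            obtain rfl : e' = e := by omega
            exact hhalt he'
        subst hf
        exact le_of_eq (mistakesFrom_const (chi1 e) S' _ hcons)
      have hreal : Realizable HhaltRER ([(3 * e, true)] ++ [(3 * e + 1, false)]) := by
        refine ⟨chi1 e, hchi1H e, ?_⟩
        intro p hp
        simp only [List.singleton_append, List.mem_cons, List.mem_singleton,
          List.not_mem_nil, or_false] at hp
        rcases hp with rfl | rfl
        · simp [chi1]
        · simp only [chi1]
          rw [decide_eq_false (by omega)]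
      have hlow : ((1 : ℕ) : ℕ∞) ≤ PostMB A HhaltRER [(3 * e, true)] := by
        have hle := le_postMB (A := A) hreal
        have hm : MistakesFrom A [(3 * e, true)] [(3 * e + 1, false)] = 1 := by
          simp [MistakesFrom, hAtrue]
        rwa [hm] at hle
      rw [hopt] at hlow
      have hup : OptPostMB HhaltRER [(3 * e, true)] ≤ ((0 : ℕ) : ℕ∞) :=
        le_trans (iInf_le _ (fun _ => chi1 e)) hC
      have := le_trans hlow hup
      simp at this
    · -- φ_e(e)↓ → A predicts true
      intro hhalt
      by_contra hAne
      have hAfalse : A [(3 * e, true)] (3 * e + 1) = false := by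
        cases hq : A [(3 * e, true)] (3 * e + 1)
        · rfl
        · exact absurd hq hAne
      have hchi2H : chi2 e ∈ HhaltRER := Or.inr ⟨e, hhalt, Or.inl rfl⟩
      have hchi3H : chi3 e ∈ HhaltRER := Or.inr ⟨e, hhalt, Or.inr rfl⟩
      -- the `Blearn` learner makes at most one more mistake
      have hB : PostMB (Blearn e) HhaltRER [(3 * e, true)] ≤ ((1 : ℕ) : ℕ∞) := by
        apply postMB_le
        intro S' hS'
        obtain ⟨f, hH, hcons⟩ := hS'
        have h3e : f (3 * e) = true := hcons (3 * e, true) (by simp)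
        have hf : f = chi1 e ∨ f = chi2 e ∨ f = chi3 e := by
          rcases hH with ⟨e', rfl⟩ | ⟨e', he', rfl | rfl⟩
          · simp only [decide_eq_true_eq] at h3e
            obtain rfl : e' = e := by omega
            exact Or.inl rfl
          · simp only [decide_eq_true_eq] at h3e
            obtain rfl : e' = e := by omega
            exact Or.inr (Or.inl rfl)
          · simp only [decide_eq_true_eq] at h3e
            obtain rfl : e' = e := by omega
            exact Or.inr (Or.inr rfl)
        refine Blearn_one e S' _ f hcons hf ?_ ?_
        · simp
        · simp
      -- but A can be forced to make two more mistakes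
      have hreal : Realizable HhaltRER ([(3 * e, true)] ++
          [(3 * e + 1, true), (3 * e + 2, !(A ([(3 * e, true)] ++ [(3 * e + 1, true)]) (3 * e + 2)))]) := by
        cases hbv : A ([(3 * e, true)] ++ [(3 * e + 1, true)]) (3 * e + 2)
        · refine ⟨chi3 e, hchi3H, ?_⟩
          intro p hp
          simp only [List.singleton_append, List.mem_cons, List.mem_singleton,
            List.not_mem_nil, or_false] at hp
          rcases hp with rfl | rfl | rfl <;> simp [chi3]
        · refine ⟨chi2 e, hchi2H, ?_⟩
          intro p hp
          simp only [List.singleton_append, List.mem_cons, List.mem_singleton,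
            List.not_mem_nil, or_false] at hp
          rcases hp with rfl | rfl | rfl
          · simp [chi2]
          · simp [chi2]
          · simp only [chi2, Bool.not_true]
            rw [decide_eq_false (by omega)]
      have h2 : ((2 : ℕ) : ℕ∞) ≤ PostMB A HhaltRER [(3 * e, true)] := by
        have hle := le_postMB (A := A) hreal
        have hm : MistakesFrom A [(3 * e, true)]
            [(3 * e + 1, true), (3 * e + 2, !(A ([(3 * e, true)] ++ [(3 * e + 1, true)]) (3 * e + 2)))] = 2 := by
          simp only [MistakesFrom, hAfalse]
          norm_num
        rwa [hm] at hle
      rw [hopt] at h2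
      have hup : OptPostMB HhaltRER [(3 * e, true)] ≤ ((1 : ℕ) : ℕ∞) :=
        le_trans (iInf_le _ (Blearn e)) hB
      have hcontr := le_trans h2 hup
      norm_num at hcontr
  refine ⟨main, ?_⟩
  rintro ⟨A, ⟨hApr, hAtot⟩, hAopt⟩
  -- the diagonal values of A are total and decide the halting problem
  have hgp : Partrec fun e : ℕ =>
      A (Encodable.encode [((3 * e : ℕ), true)]) (3 * e + 1) := by
    refine hApr.comp ?_ ?_
    · exact (Primrec.encode.comp
        ((Primrec.list_cons (α := ℕ × Bool)).comp
          (((Primrec.nat_mul.comp (Primrec.const 3) Primrec.id).pair (Primrec.const true)))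
          (Primrec.const []))).to_comp
    · exact (Primrec.nat_add.comp (Primrec.nat_mul.comp (Primrec.const 3) Primrec.id)
        (Primrec.const 1)).to_comp
  have htot : ∀ e : ℕ, (predOf A [(3 * e, true)] (3 * e + 1)).toNat ∈
      A (Encodable.encode [((3 * e : ℕ), true)]) (3 * e + 1) := by
    intro e
    obtain ⟨y, hy, hy01⟩ := hAtot [(3 * e, true)] (hSreal e) (3 * e + 1)
    rcases hy01 with rfl | rfl
    · have h1 : ¬ (1 : ℕ) ∈ A (Encodable.encode [((3 * e : ℕ), true)]) (3 * e + 1) := by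
        intro h1
        exact absurd (Part.mem_unique hy h1) (by norm_num)
      have hpf : predOf A [(3 * e, true)] (3 * e + 1) = false := by
        unfold predOf
        rw [if_neg h1]
      rw [hpf]
      exact hy
    · have h1 : (1 : ℕ) ∈ A (Encodable.encode [((3 * e : ℕ), true)]) (3 * e + 1) := hy
      have hpf : predOf A [(3 * e, true)] (3 * e + 1) = true := by
        unfold predOf
        rw [if_pos h1]
      rw [hpf]
      exact hy
  have hFcomp : Computable fun e : ℕ => (predOf A [(3 * e, true)] (3 * e + 1)).toNat :=
    hgp.of_eq_tot htot
  have hfcomp : Computable fun e : ℕ => predOf A [(3 * e, true)] (3 * e + 1) := by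
    rw [← Computable.encode_iff]
    refine hFcomp.of_eq fun e => ?_
    cases predOf A [(3 * e, true)] (3 * e + 1) <;> rfl
  have hK : ComputablePred fun e : ℕ => phiHalts e e := by
    refine ComputablePred.computable_iff.2
      ⟨fun e => predOf A [(3 * e, true)] (3 * e + 1), hfcomp, ?_⟩
    funext e
    exact propext ((main (predOf A) hAopt e).symm)
  -- diagonalization
  obtain ⟨fb, hfb, hpeq⟩ := ComputablePred.computable_iff.1 hK
  have hgpart : Partrec (fun e : ℕ => bif fb e then Part.none else Part.some 0) :=
    Partrec.cond hfb Partrec.none (Computable.const 0).partrec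
  obtain ⟨c, hc⟩ := Nat.Partrec.Code.exists_code.1 (Partrec.nat_iff.1 hgpart)
  have hphid : phi (Encodable.encode c) =
      fun e : ℕ => bif fb e then Part.none else Part.some 0 := by
    unfold phi
    rw [Denumerable.ofNat_encode]
    exact hc
  have hiff := congrFun hpeq (Encodable.encode c)
  by_cases hfd : fb (Encodable.encode c) = true
  · have hh : phiHalts (Encodable.encode c) (Encodable.encode c) := by
      rw [hiff]; exact hfd
    unfold phiHalts at hh
    rw [hphid] at hh
    simp [hfd] at hh
  · have hfd' : fb (Encodable.encode c) = false := by
      cases h : fb (Encodable.encode c)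
      · rfl
      · exact absurd h hfd
    have hh : phiHalts (Encodable.encode c) (Encodable.encode c) := by
      unfold phiHalts
      rw [hphid]
      simp [hfd']
    rw [hiff] at hh
    exact hfd hh
end

section
/- There exists a countable class H = {h_i}_{i∈ℕ} ⊆ {0,1}^ℕ of computable hypotheses with Ldim(H) = 1 such that for every partial computable two-place function A that is total with values in {0,1} on all (encoded H-realizable sample, point) pairs, and for every M ∈ ℕ, there is an H-realizable sample on which A makes more than M mistakes. That is, H has finite Littlestone dimension but is not computably online learnable with finite mistake bound. -/
open Classical

variable {X : Type*}

section Stmt13Aux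

/-- The `i`-th point of the block associated with `(e, M)`. -/
def ptS (e M i : ℕ) : ℕ := Nat.pair (Nat.pair e M) i + 1

theorem ptS_inj {e M i e' M' i' : ℕ} (h : ptS e M i = ptS e' M' i') :
    e = e' ∧ M = M' ∧ i = i' := by
  unfold ptS at h
  have h' : Nat.pair (Nat.pair e M) i = Nat.pair (Nat.pair e' M') i' := by omega
  rw [Nat.pair_eq_pair] at h'
  obtain ⟨h1, h2⟩ := h'
  rw [Nat.pair_eq_pair] at h1
  exact ⟨h1.1, h1.2, h2⟩

/-- Sample after `i` stages of diagonalization against code `e`. -/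
def FS (e M : ℕ) : ℕ → Part (List (ℕ × Bool))
  | 0 => Part.some []
  | (i+1) => (FS e M i).bind fun S =>
      (phi e (Nat.pair (Encodable.encode S) (ptS e M i))).map fun y =>
        S ++ [(ptS e M i, if y = 1 then false else true)]

theorem FS_zero (e M : ℕ) : ([] : List (ℕ × Bool)) ∈ FS e M 0 := by
  simp [FS]

theorem mem_FS_succ {e M i : ℕ} {S' : List (ℕ × Bool)} :
    S' ∈ FS e M (i+1) ↔ ∃ S ∈ FS e M i,
      ∃ y ∈ phi e (Nat.pair (Encodable.encode S) (ptS e M i)),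
        S' = S ++ [(ptS e M i, if y = 1 then false else true)] := by
  simp only [FS, Part.mem_bind_iff, Part.mem_map_iff]
  constructor
  · rintro ⟨S, hS, y, hy, rfl⟩; exact ⟨S, hS, y, hy, rfl⟩
  · rintro ⟨S, hS, y, hy, rfl⟩; exact ⟨S, hS, y, hy, rfl⟩

theorem FS_dom_succ {e M i : ℕ} (h : (FS e M (i+1)).Dom) : (FS e M i).Dom := by
  rw [Part.dom_iff_mem] at h ⊢
  obtain ⟨S', hS'⟩ := h
  obtain ⟨S, hS, -⟩ := mem_FS_succ.mp hS'
  exact ⟨S, hS⟩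

theorem FS_map_fst {e M : ℕ} : ∀ {i : ℕ} {S : List (ℕ × Bool)}, S ∈ FS e M i →
    S.map Prod.fst = (List.range i).map (ptS e M) := by
  intro i
  induction i with
  | zero => intro S hS; simp only [FS, Part.mem_some_iff] at hS; subst hS; simp
  | succ i ih =>
    intro S' hS'
    obtain ⟨S, hS, y, hy, rfl⟩ := mem_FS_succ.mp hS'
    rw [List.map_append, ih hS, List.range_succ, List.map_append]
    simp

theorem FS_prefix {e M : ℕ} : ∀ {i j : ℕ}, i ≤ j →
    ∀ {S T : List (ℕ × Bool)}, S ∈ FS e M i → T ∈ FS e M j → S <+: T := by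
  intro i j hij
  induction j with
  | zero =>
    intro S T hS hT
    have : i = 0 := Nat.le_zero.mp hij
    subst this
    rw [Part.mem_unique hS hT]
  | succ j ih =>
    intro S T hS hT
    rcases Nat.lt_or_ge i (j+1) with h | h
    · obtain ⟨T₀, hT₀, y, hy, rfl⟩ := mem_FS_succ.mp hT
      exact (ih (Nat.lt_succ_iff.mp h) hS hT₀).trans (List.prefix_append _ _)
    · have : i = j + 1 := le_antisymm hij h
      subst this
      rw [Part.mem_unique hS hT]

theorem FS_zero_dom (e M : ℕ) : (FS e M 0).Dom :=
  Part.dom_iff_mem.mpr ⟨[], FS_zero e M⟩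

noncomputable def NS (e M : ℕ) : ℕ :=
  @Nat.findGreatest (fun i => (FS e M i).Dom) (Classical.decPred _) (M+1)

theorem NS_dom (e M : ℕ) : (FS e M (NS e M)).Dom :=
  @Nat.findGreatest_spec 0 (fun i => (FS e M i).Dom) (Classical.decPred _) (M+1)
    (Nat.zero_le _) (FS_zero_dom e M)

theorem le_NS {e M i : ℕ} (h1 : i ≤ M + 1) (h2 : (FS e M i).Dom) : i ≤ NS e M :=
  @Nat.le_findGreatest i (fun i => (FS e M i).Dom) (Classical.decPred _) (M+1) h1 h2

noncomputable def SNS (e M : ℕ) : List (ℕ × Bool) := (FS e M (NS e M)).get (NS_dom e M)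

theorem SNS_mem (e M : ℕ) : SNS e M ∈ FS e M (NS e M) := Part.get_mem _

noncomputable def hdiag (e M : ℕ) : ℕ → Bool := fun x => decide ((x, true) ∈ SNS e M)

def hstar : ℕ → Bool := fun x => decide (x = 0)

def Hcls : Set (ℕ → Bool) := insert hstar {h | ∃ e M, h = hdiag e M}

theorem hdiag_mem (e M : ℕ) : hdiag e M ∈ Hcls := Or.inr ⟨e, M, rfl⟩

theorem exists_idx {e M x : ℕ} (h : hdiag e M x = true) : ∃ i, x = ptS e M i := by
  unfold hdiag at h
  rw [decide_eq_true_eq] at h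
  have hx : x ∈ (SNS e M).map Prod.fst := List.mem_map.mpr ⟨(x, true), h, rfl⟩
  rw [FS_map_fst (SNS_mem e M)] at hx
  obtain ⟨i, -, rfl⟩ := List.mem_map.mp hx
  exact ⟨i, rfl⟩

theorem hdiag_zero (e M : ℕ) : hdiag e M 0 = false := by
  by_contra h
  rw [Bool.not_eq_false] at h
  obtain ⟨i, hi⟩ := exists_idx h
  exact Nat.succ_ne_zero _ hi.symm

theorem SNS_nodup_keys (e M : ℕ) : ((SNS e M).map Prod.fst).Nodup := by
  rw [FS_map_fst (SNS_mem e M)]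
  exact List.nodup_range.map (fun a b hab => (ptS_inj hab).2.2)

theorem eq_snd_of_nodup_keys {l : List (ℕ × Bool)} (h : (l.map Prod.fst).Nodup)
    {x : ℕ} {b b' : Bool} (h1 : (x, b) ∈ l) (h2 : (x, b') ∈ l) : b = b' := by
  induction l with
  | nil => cases h1
  | cons p t ih =>
    rw [List.map_cons, List.nodup_cons] at h
    rcases List.mem_cons.mp h1 with h1 | h1 <;> rcases List.mem_cons.mp h2 with h2 | h2
    · rw [← h1] at h2; exact (congrArg Prod.snd h2).symm
    · exfalso; exact h.1 (by rw [← h1]; exact List.mem_map.mpr ⟨(x, b'), h2, rfl⟩)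
    · exfalso; exact h.1 (by rw [← h2]; exact List.mem_map.mpr ⟨(x, b), h1, rfl⟩)
    · exact ih h.2 h1 h2

theorem consistent_hdiag_prefix {e M : ℕ} {S : List (ℕ × Bool)} (h : S <+: SNS e M) :
    Consistent (hdiag e M) S := by
  rintro ⟨x, b⟩ hp
  have hpS : (x, b) ∈ SNS e M := h.subset hp
  cases b with
  | true => exact decide_eq_true_eq.mpr hpS |>.symm ▸ rfl
  | false =>
    show decide ((x, true) ∈ SNS e M) = false
    rw [decide_eq_false_iff_not]
    intro hmem
    exact absurd (eq_snd_of_nodup_keys (SNS_nodup_keys e M) hpS hmem) (by simp)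

theorem realizable_FS {e M i : ℕ} {S : List (ℕ × Bool)} (hS : S ∈ FS e M i)
    (hi : i ≤ M + 1) : Realizable Hcls S :=
  ⟨hdiag e M, hdiag_mem e M,
    consistent_hdiag_prefix
      (FS_prefix (le_NS hi (Part.dom_iff_mem.mpr ⟨S, hS⟩)) hS (SNS_mem e M))⟩

end Stmt13Aux

-- aux dev 2
section Stmt13Aux2

theorem exists_code_of {A : ℕ → ℕ →. ℕ} (h : Partrec₂ A) :
    ∃ e, ∀ n x, A n x = phi e (Nat.pair n x) := by
  have h1 : Partrec fun p : ℕ × ℕ => A p.1 p.2 := h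
  have h2 : Partrec fun n : ℕ => A n.unpair.1 n.unpair.2 := h1.comp Computable.unpair
  obtain ⟨c, hc⟩ := Nat.Partrec.Code.exists_code.mp (Partrec.nat_iff.mp h2)
  refine ⟨Encodable.encode c, fun n x => ?_⟩
  unfold phi
  rw [Denumerable.ofNat_encode, hc]
  simp

theorem FS_dom_le {e M : ℕ} : ∀ {a b : ℕ}, a ≤ b → (FS e M b).Dom → (FS e M a).Dom := by
  intro a b hab
  induction hab with
  | refl => exact id
  | step _ ih => exact fun hb => ih (FS_dom_succ hb)

theorem stages_dom {A : ℕ → ℕ →. ℕ} (hA : IsCOnlineLearner A Hcls) {e : ℕ}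
    (he : ∀ n x, A n x = phi e (Nat.pair n x)) (M : ℕ) :
    ∀ i, i ≤ M + 1 → (FS e M i).Dom := by
  intro i
  induction i with
  | zero => intro _; exact FS_zero_dom e M
  | succ i ih =>
    intro hle
    have hd := ih (Nat.le_of_succ_le hle)
    obtain ⟨S, hS⟩ := Part.dom_iff_mem.mp hd
    have hr : Realizable Hcls S := realizable_FS hS (by omega)
    obtain ⟨y, hy, -⟩ := hA.2 S hr (ptS e M i)
    rw [he] at hy
    exact Part.dom_iff_mem.mpr ⟨_, mem_FS_succ.mpr ⟨S, hS, y, hy, rfl⟩⟩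

theorem mistakes_count {A : ℕ → ℕ →. ℕ} {e M : ℕ}
    (he : ∀ n x, A n x = phi e (Nat.pair n x)) :
    ∀ j k, k + j = M + 1 → ∀ S D, S ∈ FS e M k → S ++ D ∈ FS e M (M + 1) →
      MistakesFrom (predOf A) S D = j := by
  intro j
  induction j with
  | zero =>
    intro k hk S D hS hSD
    have hk' : k = M + 1 := by omega
    subst hk'
    have : S = S ++ D := Part.mem_unique hS hSD
    have hD : D = [] := by
      have hlen := congrArg List.length this
      rw [List.length_append] at hlen
      exact List.eq_nil_of_length_eq_zero (by omega)
    subst hD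
    rfl
  | succ j ih =>
    intro k hk S D hS hSD
    have hd1 : (FS e M (k + 1)).Dom :=
      FS_dom_le (by omega) (Part.dom_iff_mem.mpr ⟨_, hSD⟩)
    obtain ⟨T, hT⟩ := Part.dom_iff_mem.mp hd1
    obtain ⟨S', hS', y, hy, rfl⟩ := mem_FS_succ.mp hT
    have hSS' : S' = S := Part.mem_unique hS' hS
    subst hSS'
    have hpre : S' ++ [(ptS e M k, if y = 1 then false else true)] <+: S' ++ D :=
      FS_prefix (by omega) hT hSD
    obtain ⟨t, ht⟩ := hpre
    rw [List.append_assoc] at ht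
    have hD : D = (ptS e M k, if y = 1 then false else true) :: t := by
      have := List.append_cancel_left ht
      simpa using this.symm
    subst hD
    have hmis : predOf A S' (ptS e M k) ≠ (if y = 1 then false else true) := by
      have hsome : phi e (Nat.pair (Encodable.encode S') (ptS e M k)) = Part.some y :=
        Part.eq_some_iff.mpr hy
      unfold predOf
      rw [he, hsome]
      by_cases hy1 : y = 1
      · subst hy1
        rw [if_pos (Part.mem_some_iff.mpr rfl), if_pos rfl]
        simp
      · rw [if_neg (fun hmem => hy1 (Part.mem_some_iff.mp hmem).symm), if_neg hy1]
        simp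
    show (if predOf A S' (ptS e M k, if y = 1 then false else true).1
        ≠ (ptS e M k, if y = 1 then false else true).2 then 1 else 0)
      + MistakesFrom (predOf A) (S' ++ [(ptS e M k, if y = 1 then false else true)]) t = j + 1
    rw [if_pos hmis]
    have := ih (k + 1) (by omega) (S' ++ [(ptS e M k, if y = 1 then false else true)]) t hT
      (by rw [List.append_assoc]; exact hSD)
    omega

end Stmt13Aux2

-- aux dev 3
section Stmt13Aux3

theorem shatters_mono : ∀ (d : ℕ) (H H' : Set (ℕ → Bool)), H ⊆ H' →
    Shatters H d → Shatters H' d := by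
  intro d
  induction d with
  | zero => exact fun H H' hsub h => h.mono hsub
  | succ d ih =>
    rintro H H' hsub ⟨x, hf, ht⟩
    exact ⟨x, ih _ _ (fun g hg => ⟨hsub hg.1, hg.2⟩) hf,
      ih _ _ (fun g hg => ⟨hsub hg.1, hg.2⟩) ht⟩

theorem shatters_succ : ∀ (d : ℕ) (H : Set (ℕ → Bool)), Shatters H (d + 1) → Shatters H d := by
  intro d
  induction d with
  | zero => rintro H ⟨x, -, g, hg⟩; exact ⟨g, hg.1⟩
  | succ d ih => rintro H ⟨x, hf, ht⟩; exact ⟨x, ih _ hf, ih _ ht⟩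

theorem true_unique {g1 g2 : ℕ → Bool} {x : ℕ} (h1 : g1 ∈ Hcls) (h2 : g2 ∈ Hcls)
    (t1 : g1 x = true) (t2 : g2 x = true) : g1 = g2 := by
  have hzero : ∀ {g : ℕ → Bool}, g ∈ Hcls → g x = true → g ≠ hstar → ∃ e M i,
      g = hdiag e M ∧ x = ptS e M i := by
    rintro g (rfl | ⟨e, M, rfl⟩) ht hne
    · exact absurd rfl hne
    · obtain ⟨i, hi⟩ := exists_idx ht
      exact ⟨e, M, i, rfl, hi⟩
  by_cases hg1 : g1 = hstar <;> by_cases hg2 : g2 = hstar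
  · rw [hg1, hg2]
  · exfalso
    obtain ⟨e, M, i, -, hx⟩ := hzero h2 t2 hg2
    rw [hg1] at t1
    have : x = 0 := by simpa [hstar] using t1
    rw [this] at hx
    exact Nat.succ_ne_zero _ hx.symm
  · exfalso
    obtain ⟨e, M, i, -, hx⟩ := hzero h1 t1 hg1
    rw [hg2] at t2
    have : x = 0 := by simpa [hstar] using t2
    rw [this] at hx
    exact Nat.succ_ne_zero _ hx.symm
  · obtain ⟨e, M, i, rfl, hx⟩ := hzero h1 t1 hg1
    obtain ⟨e', M', i', rfl, hx'⟩ := hzero h2 t2 hg2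
    obtain ⟨he, hM, -⟩ := ptS_inj (hx.symm.trans hx')
    rw [he, hM]

theorem not_shatters_two : ¬ Shatters Hcls 2 := by
  rintro ⟨x, -, ht⟩
  obtain ⟨y, ⟨g1, hg1⟩, ⟨g2, hg2⟩⟩ := ht
  obtain ⟨⟨hg1H, hg1x⟩, hg1y⟩ := hg1
  obtain ⟨⟨hg2H, hg2x⟩, hg2y⟩ := hg2
  have : g1 = g2 := true_unique hg1H hg2H hg1x hg2x
  rw [this, hg2y] at hg1y
  exact absurd hg1y (by simp)

theorem not_shatters_ge (d : ℕ) : ¬ Shatters Hcls (d + 2) := by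
  induction d with
  | zero => exact not_shatters_two
  | succ d ih => exact fun h => ih (shatters_succ _ _ h)

theorem shatters_Hcls_one : Shatters Hcls 1 := by
  refine ⟨0, ⟨hdiag 0 0, ⟨hdiag_mem 0 0, hdiag_zero 0 0⟩⟩, ⟨hstar, ⟨Or.inl rfl, ?_⟩⟩⟩
  simp [hstar]

theorem ldim_Hcls : Ldim Hcls = ((1 : ℕ∞) : WithBot ℕ∞) := by
  unfold Ldim
  apply le_antisymm
  · apply iSup₂_le
    intro d hd
    have hd1 : d ≤ 1 := by
      by_contra hcon
      push_neg at hcon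
      have h2 : d - 2 + 2 = d := by omega
      exact not_shatters_ge (d - 2) (by rw [h2]; exact hd)
    have : ((d : ℕ∞) : WithBot ℕ∞) ≤ ((1 : ℕ∞) : WithBot ℕ∞) := by
      rw [WithBot.coe_le_coe]
      exact_mod_cast hd1
    exact this
  · have h1 : (1 : ℕ) ∈ {d : ℕ | Shatters Hcls d} := shatters_Hcls_one
    have := le_iSup₂ (f := fun (d : ℕ) (_ : d ∈ {d : ℕ | Shatters Hcls d}) =>
      ((d : ℕ∞) : WithBot ℕ∞)) 1 h1
    simpa using this

theorem computable_mem_list : ∀ K : List ℕ, Computable fun x : ℕ => decide (x ∈ K) := by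
  intro K
  induction K with
  | nil => exact (Computable.const false).of_eq (fun x => by simp)
  | cons a t ih =>
    have h1 : Computable fun x : ℕ => decide (x = a) :=
      Primrec.to_comp (Primrec.eq.comp Primrec.id (Primrec.const a)).decide
    have h2 := Computable.cond h1 (Computable.const true) ih
    exact h2.of_eq fun x => by
      by_cases hx : x = a <;> simp [hx, List.mem_cons]

theorem computable_hdiag (e M : ℕ) : Computable (hdiag e M) := by
  have key : ∀ x : ℕ, hdiag e M x
      = decide (x ∈ ((SNS e M).filter (fun p => p.2)).map Prod.fst) := by
    intro x
    unfold hdiag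
    rw [decide_eq_decide]
    simp only [List.mem_map, List.mem_filter]
    constructor
    · intro h; exact ⟨(x, true), ⟨h, rfl⟩, rfl⟩
    · rintro ⟨⟨x', b⟩, ⟨hmem, hb⟩, rfl⟩
      simp only at hb
      rw [hb] at hmem
      exact hmem
  exact (computable_mem_list _).of_eq fun x => (key x).symm

theorem computable_hstar : Computable hstar :=
  (computable_mem_list [0]).of_eq fun x => by simp [hstar]

theorem countable_Hcls : Hcls.Countable := by
  have : {h : ℕ → Bool | ∃ e M, h = hdiag e M}
      = Set.range (fun p : ℕ × ℕ => hdiag p.1 p.2) := by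
    ext h
    constructor
    · rintro ⟨e, M, rfl⟩; exact ⟨(e, M), rfl⟩
    · rintro ⟨⟨e, M⟩, rfl⟩; exact ⟨e, M, rfl⟩
  unfold Hcls
  rw [this]
  exact (Set.countable_range _).insert hstar

end Stmt13Aux3

/-- there is a countable class of computable hypotheses over ℕ with
Littlestone dimension 1 such that every computable online learner for it can be forced
to make more than `M` mistakes on some realizable sample, for every `M`. -/
theorem stmt13 :
    ∃ H : Set (ℕ → Bool),
      H.Countable ∧ (∀ h ∈ H, Computable h) ∧
      Ldim H = ((1 : ℕ∞) : WithBot ℕ∞) ∧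
      ∀ A : ℕ → ℕ →. ℕ, IsCOnlineLearner A H →
        ∀ M : ℕ, ∃ S : List (ℕ × Bool), Realizable H S ∧ M < Mistakes (predOf A) S := by
  refine ⟨Hcls, countable_Hcls, ?_, ldim_Hcls, ?_⟩
  · rintro h (rfl | ⟨e, M, rfl⟩)
    · exact computable_hstar
    · exact computable_hdiag e M
  · intro A hA M
    obtain ⟨e, he⟩ := exists_code_of hA.1
    have hdom := stages_dom hA he M (M + 1) le_rfl
    obtain ⟨S, hS⟩ := Part.dom_iff_mem.mp hdom
    refine ⟨S, realizable_FS hS le_rfl, ?_⟩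
    have hm := mistakes_count he (M + 1) 0 (by omega) [] S (FS_zero e M) (by simpa using hS)
    unfold Mistakes
    omega
end

section
/- If a class H ⊆ {0,1}^ℕ contains 2^n thresholds — i.e., there exist x_1,...,x_{2^n} ∈ ℕ and h_1,...,h_{2^n} ∈ H with h_i(x_j) = 1 iff i ≥ j — then Ldim(H) ≥ n. -/
open Classical

variable {X : Type*}

lemma shatters_of_thresholds : ∀ (n : ℕ) (H : Set (ℕ → Bool))
    (x : Fin (2 ^ n) → ℕ) (h : Fin (2 ^ n) → ℕ → Bool),
    (∀ i, h i ∈ H) → (∀ i j, h i (x j) = true ↔ j ≤ i) → Shatters H n := by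
  intro n
  induction n with
  | zero => intro H x h hmem _; exact ⟨h 0, hmem 0⟩
  | succ n ih =>
    intro H x h hmem hthr
    have hlt : 2 ^ n < 2 ^ (n + 1) := by
      have := Nat.pow_lt_pow_succ (a := 2) (by norm_num) (n := n)
      simpa using this
    set m : Fin (2 ^ (n + 1)) := ⟨2 ^ n, hlt⟩ with hm
    refine ⟨x m, ?_, ?_⟩
    · -- false branch: indices i < 2^n
      have hemb : ∀ i : Fin (2 ^ n), (i : ℕ) < 2 ^ (n + 1) :=
        fun i => lt_trans i.isLt hlt
      refine ih _ (fun j => x ⟨j, hemb j⟩) (fun i => h ⟨i, hemb i⟩) ?_ ?_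
      · intro i
        refine ⟨hmem _, ?_⟩
        have : ¬ (h ⟨i, hemb i⟩ (x m) = true) := by
          rw [hthr]
          intro hle
          exact absurd (hle : (m : ℕ) ≤ i) (not_le.mpr i.isLt)
        simpa using this
      · intro i j
        rw [hthr]
        exact ⟨fun hle => hle, fun hle => hle⟩
    · -- true branch: indices 2^n + i
      have hemb : ∀ i : Fin (2 ^ n), 2 ^ n + (i : ℕ) < 2 ^ (n + 1) := by
        intro i
        have : 2 ^ (n + 1) = 2 ^ n + 2 ^ n := by ring
        omega
      refine ih _ (fun j => x ⟨2 ^ n + j, hemb j⟩) (fun i => h ⟨2 ^ n + i, hemb i⟩) ?_ ?_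
      · intro i
        refine ⟨hmem _, ?_⟩
        rw [hthr]
        show (m : ℕ) ≤ 2 ^ n + (i : ℕ)
        simp [hm]
      · intro i j
        rw [hthr]
        constructor
        · intro hle
          have : 2 ^ n + (j : ℕ) ≤ 2 ^ n + (i : ℕ) := hle
          exact Nat.le_of_add_le_add_left this
        · intro hle
          show 2 ^ n + (j : ℕ) ≤ 2 ^ n + (i : ℕ)
          exact Nat.add_le_add_left hle _

/-- a class containing `2^n` thresholds has Littlestone dimension at
least `n`. -/
theorem stmt14 (H : Set (ℕ → Bool)) (n : ℕ)
    (x : Fin (2 ^ n) → ℕ) (h : Fin (2 ^ n) → ℕ → Bool)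
    (hmem : ∀ i, h i ∈ H)
    (hthr : ∀ i j, h i (x j) = true ↔ j ≤ i) :
    ((n : ℕ∞) : WithBot ℕ∞) ≤ Ldim H := by
  have hs : Shatters H n := shatters_of_thresholds n H x h hmem hthr
  exact le_iSup₂ (f := fun (d : ℕ) (_ : d ∈ {d : ℕ | Shatters H d}) =>
    ((d : ℕ∞) : WithBot ℕ∞)) n hs
end
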